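/- arXiv:math/0605385 — 3 statements merged into one kernel-verified Lean document; each statement's English description precedes it below -/
import Mathlib

section
/- (Erdős–Dushnik–Miller theorem for regular cardinals.) If κ is a regular uncountable cardinal, then κ → (κ, ω+1)²: for every coloring c of the 2-element subsets of κ with colors red and green, either there is a set H ⊆ κ of cardinality κ all of whose 2-element subsets are colored red, or there is a set H ⊆ κ of order type ω+1 all of whose 2-element subsets are colored green. -/
universe u

open Cardinal Ordinal

/-- The two colors. -/
inductive Color | red | green

/-- The order type of a set of ordinals. -/
noncomputable def otype (H : Set Ordinal.{u}) : Ordinal.{u + 1} :=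
  Ordinal.type (Subrel ((· < ·) : Ordinal.{u} → Ordinal.{u} → Prop) (· ∈ H))

namespace EDM

/-- Common green strict upper neighbors (below `Θ`) of the entries of `s`. -/
def Kset (c : Ordinal.{u} → Ordinal.{u} → Color) (Θ : Ordinal.{u}) (s : List Ordinal.{u}) :
    Set Ordinal.{u} :=
  {β | β < Θ ∧ ∀ x ∈ s, x < β ∧ c x β = Color.green}

/-- Elements of `Kset` that are red to all smaller elements of `Kset`. -/
def Dset (c : Ordinal.{u} → Ordinal.{u} → Color) (Θ : Ordinal.{u}) (s : List Ordinal.{u}) :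
    Set Ordinal.{u} :=
  {β | β ∈ Kset c Θ s ∧ ∀ x ∈ Kset c Θ s, x < β → c x β = Color.red}

noncomputable def Fb (c : Ordinal.{u} → Ordinal.{u} → Color) (Θ : Ordinal.{u})
    (s : List Ordinal.{u}) : Ordinal.{u} :=
  sSup (Dset c Θ s)

lemma Dset_bdd (c : Ordinal.{u} → Ordinal.{u} → Color) (Θ : Ordinal.{u})
    (s : List Ordinal.{u}) : BddAbove (Dset c Θ s) :=
  ⟨Θ, fun _ hβ => hβ.1.1.le⟩

lemma Fb_le (c : Ordinal.{u} → Ordinal.{u} → Color) (Θ : Ordinal.{u})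
    (s : List Ordinal.{u}) : Fb c Θ s ≤ Θ :=
  csSup_le' fun _ hβ => hβ.1.1.le

noncomputable def bnd (c : Ordinal.{u} → Ordinal.{u} → Color) (Θ : Ordinal.{u})
    (s : List Ordinal.{u}) : Ordinal.{u} :=
  if Fb c Θ s < Θ then Fb c Θ s + 1 else 0

noncomputable def bump (c : Ordinal.{u} → Ordinal.{u} → Color) (Θ : Ordinal.{u})
    (γ : Ordinal.{u}) : Ordinal.{u} :=
  (γ + 1) ⊔ ⨆ t : List γ.ToType,
    bnd c Θ (t.map fun x => ((ToType.mk (o := γ)).symm x : Ordinal.{u}))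

lemma lt_bump (c : Ordinal.{u} → Ordinal.{u} → Color) (Θ γ : Ordinal.{u}) :
    γ < bump c Θ γ :=
  lt_of_lt_of_le (lt_add_one γ) (le_max_left _ _)

lemma bnd_le_bump (c : Ordinal.{u} → Ordinal.{u} → Color) (Θ γ : Ordinal.{u})
    (s : List Ordinal.{u}) (hs : ∀ x ∈ s, x < γ) :
    bnd c Θ s ≤ bump c Θ γ := by
  set t : List γ.ToType :=
    s.attach.map (fun x => ToType.mk (o := γ) ⟨x.1, hs x.1 x.2⟩) with ht
  have hst : (t.map fun x => ((ToType.mk (o := γ)).symm x : Ordinal.{u})) = s := by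
    rw [ht, List.map_map]
    have : ((fun x => ((ToType.mk (o := γ)).symm x : Ordinal.{u})) ∘
        (fun x : {x // x ∈ s} => ToType.mk (o := γ) ⟨x.1, hs x.1 x.2⟩)) =
        (fun x : {x // x ∈ s} => x.1) := by
      funext x
      simp
    rw [this]
    simp
  calc bnd c Θ s = bnd c Θ (t.map fun x => ((ToType.mk (o := γ)).symm x : Ordinal.{u})) := by
        rw [hst]
    _ ≤ ⨆ t : List γ.ToType,
        bnd c Θ (t.map fun x => ((ToType.mk (o := γ)).symm x : Ordinal.{u})) :=
        Ordinal.le_iSup _ t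
    _ ≤ bump c Θ γ := le_max_right _ _

lemma bump_lt (c : Ordinal.{u} → Ordinal.{u} → Color) {κ : Cardinal.{u}}
    (hreg : κ.IsRegular) (hunc : ℵ₀ < κ) {γ : Ordinal.{u}} (hγ : γ < κ.ord) :
    bump c κ.ord γ < κ.ord := by
  have hlim : Order.IsSuccLimit κ.ord := Cardinal.isSuccLimit_ord hreg.aleph0_le
  apply max_lt
  · rw [Ordinal.add_one_eq_succ]; exact hlim.succ_lt hγ
  · apply Ordinal.iSup_lt_ord _ _
    · calc #(List γ.ToType) ≤ max ℵ₀ #γ.ToType := mk_list_le_max _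
        _ < κ.ord.cof := by
          rw [hreg.cof_eq, mk_toType]
          exact max_lt hunc (Cardinal.lt_ord.mp hγ)
    · intro t
      unfold bnd
      split
      · next h => rw [Ordinal.add_one_eq_succ]; exact hlim.succ_lt h
      · exact hlim.pos

/-- The iterates of `bump` starting at `0`. -/
noncomputable def seq (c : Ordinal.{u} → Ordinal.{u} → Color) (Θ : Ordinal.{u}) (n : ℕ) :
    Ordinal.{u} :=
  (bump c Θ)^[n] 0

lemma seq_lt_succ (c : Ordinal.{u} → Ordinal.{u} → Color) (Θ : Ordinal.{u}) (n : ℕ) :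
    seq c Θ n < seq c Θ (n + 1) := by
  rw [seq, seq, Function.iterate_succ_apply']
  exact lt_bump c Θ _

lemma seq_strictMono (c : Ordinal.{u} → Ordinal.{u} → Color) (Θ : Ordinal.{u}) :
    StrictMono (seq c Θ) :=
  strictMono_nat_of_lt_succ (seq_lt_succ c Θ)

lemma seq_lt (c : Ordinal.{u} → Ordinal.{u} → Color) {κ : Cardinal.{u}}
    (hreg : κ.IsRegular) (hunc : ℵ₀ < κ) (n : ℕ) : seq c κ.ord n < κ.ord := by
  induction n with
  | zero =>
    rw [seq, Function.iterate_zero_apply]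
    exact (Cardinal.isSuccLimit_ord hreg.aleph0_le).pos
  | succ n ih =>
    rw [seq, Function.iterate_succ_apply']
    exact bump_lt c hreg hunc ih

/-- An ordinal `δ < κ.ord` closed under the bounds of all the `Dset`s of lists below it. -/
noncomputable def delta (c : Ordinal.{u} → Ordinal.{u} → Color) (Θ : Ordinal.{u}) :
    Ordinal.{u} :=
  ⨆ n : ℕ, seq c Θ n

lemma delta_lt (c : Ordinal.{u} → Ordinal.{u} → Color) {κ : Cardinal.{u}}
    (hreg : κ.IsRegular) (hunc : ℵ₀ < κ) : delta c κ.ord < κ.ord := by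
  apply Ordinal.iSup_lt_ord_lift _ (seq_lt c hreg hunc)
  rw [Cardinal.mk_nat, Cardinal.lift_aleph0, hreg.cof_eq]
  exact hunc

lemma list_lt_seq (c : Ordinal.{u} → Ordinal.{u} → Color) (Θ : Ordinal.{u})
    (s : List Ordinal.{u}) (hs : ∀ x ∈ s, x < delta c Θ) :
    ∃ n : ℕ, ∀ x ∈ s, x < seq c Θ n := by
  induction s with
  | nil => exact ⟨0, by simp⟩
  | cons a l ih =>
    obtain ⟨n, hn⟩ := ih (fun x hx => hs x (List.mem_cons_of_mem a hx))
    have ha : a < delta c Θ := hs a List.mem_cons_self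
    obtain ⟨m, hm⟩ := Ordinal.lt_iSup_iff.mp ha
    refine ⟨max n m, fun x hx => ?_⟩
    rcases List.mem_cons.mp hx with rfl | hx
    · exact hm.trans_le ((seq_strictMono c Θ).monotone (le_max_right n m))
    · exact (hn x hx).trans_le ((seq_strictMono c Θ).monotone (le_max_left n m))

lemma delta_closed (c : Ordinal.{u} → Ordinal.{u} → Color) {κ : Cardinal.{u}}
    (hreg : κ.IsRegular) (hunc : ℵ₀ < κ) (s : List Ordinal.{u})
    (hs : ∀ x ∈ s, x < delta c κ.ord) :
    Fb c κ.ord s = κ.ord ∨ Fb c κ.ord s < delta c κ.ord := by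
  by_cases hF : Fb c κ.ord s < κ.ord
  · right
    obtain ⟨n, hn⟩ := list_lt_seq c κ.ord s hs
    have h1 : bnd c κ.ord s ≤ bump c κ.ord (seq c κ.ord n) := bnd_le_bump c κ.ord _ s hn
    have h2 : bnd c κ.ord s = Fb c κ.ord s + 1 := if_pos hF
    have h3 : seq c κ.ord (n + 1) = bump c κ.ord (seq c κ.ord n) := by
      rw [seq, Function.iterate_succ_apply']; rfl
    have h4 : Fb c κ.ord s < seq c κ.ord (n + 1) := by
      rw [h3]
      exact lt_of_lt_of_le (lt_add_one _) (h2 ▸ h1)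
    have h5 : seq c κ.ord (n + 1) ≤ delta c κ.ord := by
      rw [delta]
      exact Ordinal.le_iSup _ _
    exact h4.trans_le h5
  · left
    exact le_antisymm (Fb_le c κ.ord s) (not_lt.mp hF)

/-- The green-below neighbourhood of `δ`. -/
def Gset (c : Ordinal.{u} → Ordinal.{u} → Color) (δ : Ordinal.{u}) : Set Ordinal.{u} :=
  {x | x < δ ∧ c x δ = Color.green}

section Chain

variable (c : Ordinal.{u} → Ordinal.{u} → Color) (Θ δ : Ordinal.{u})
  (hA : ∀ s : List Ordinal.{u}, (∀ x ∈ s, x ∈ Gset c δ) →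
    ∃ β, β ∈ Kset c Θ s ∧ β ∈ Gset c δ)

/-- A growing chain of green-connected elements of `Gset`. -/
noncomputable def chain : (n : ℕ) → {l : List Ordinal.{u} // ∀ x ∈ l, x ∈ Gset c δ}
  | 0 => ⟨[], by simp⟩
  | n + 1 =>
    ⟨(chain n).1 ++ [(hA (chain n).1 (chain n).2).choose], by
      intro x hx
      rcases List.mem_append.mp hx with h | h
      · exact (chain n).2 x h
      · rw [List.mem_singleton] at h
        subst h
        exact (hA (chain n).1 (chain n).2).choose_spec.2⟩

/-- The `n`-th element of the chain. -/
noncomputable def cf (n : ℕ) : Ordinal.{u} :=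
  (hA (chain c Θ δ hA n).1 (chain c Θ δ hA n).2).choose

lemma chain_succ (n : ℕ) :
    (chain c Θ δ hA (n + 1)).1 = (chain c Θ δ hA n).1 ++ [cf c Θ δ hA n] := rfl

lemma cf_mem_K (n : ℕ) : cf c Θ δ hA n ∈ Kset c Θ (chain c Θ δ hA n).1 :=
  (hA (chain c Θ δ hA n).1 (chain c Θ δ hA n).2).choose_spec.1

lemma cf_mem_G (n : ℕ) : cf c Θ δ hA n ∈ Gset c δ :=
  (hA (chain c Θ δ hA n).1 (chain c Θ δ hA n).2).choose_spec.2

lemma cf_mem_chain {m n : ℕ} (h : m < n) : cf c Θ δ hA m ∈ (chain c Θ δ hA n).1 := by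
  induction n with
  | zero => omega
  | succ n ih =>
    rw [chain_succ, List.mem_append]
    rcases Nat.lt_succ_iff_lt_or_eq.mp h with h' | rfl
    · exact Or.inl (ih h')
    · exact Or.inr (List.mem_singleton_self _)

lemma cf_lt_cf {m n : ℕ} (h : m < n) : cf c Θ δ hA m < cf c Θ δ hA n :=
  ((cf_mem_K c Θ δ hA n).2 _ (cf_mem_chain c Θ δ hA h)).1

lemma cf_green {m n : ℕ} (h : m < n) : c (cf c Θ δ hA m) (cf c Θ δ hA n) = Color.green :=
  ((cf_mem_K c Θ δ hA n).2 _ (cf_mem_chain c Θ δ hA h)).2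

end Chain

/-- The order type of the range of a strictly monotone sequence together with a point above
it is `ω + 1`. -/
lemma otype_omega_succ (f : ℕ → Ordinal.{u}) (hf : StrictMono f) (δ : Ordinal.{u})
    (hδ : ∀ n, f n < δ) :
    otype (Set.range f ∪ {δ}) = Ordinal.omega0 + 1 := by
  set H : Set Ordinal.{u} := Set.range f ∪ {δ} with hH
  have hmem : ∀ n, f n ∈ H := fun n => Or.inl ⟨n, rfl⟩
  have hδH : δ ∈ H := Or.inr rfl
  let e : ℕ ⊕ PUnit.{1} → H := Sum.elim (fun n => ⟨f n, hmem n⟩) (fun _ => ⟨δ, hδH⟩)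
  have hbij : Function.Bijective e := by
    constructor
    · rintro (m | ⟨⟩) (n | ⟨⟩) h <;> simp only [e, Sum.elim_inl, Sum.elim_inr,
        Subtype.mk.injEq] at h
      · rw [hf.injective h]
      · exact absurd h (ne_of_lt (hδ m))
      · exact absurd h.symm (ne_of_lt (hδ n))
      · rfl
    · rintro ⟨x, ⟨n, rfl⟩ | hx⟩
      · exact ⟨Sum.inl n, rfl⟩
      · rw [Set.mem_singleton_iff] at hx
        exact ⟨Sum.inr PUnit.unit, by simp [e, hx]⟩
  let E : ℕ ⊕ PUnit.{1} ≃ H := Equiv.ofBijective e hbij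
  let R : (ℕ ⊕ PUnit.{1}) → (ℕ ⊕ PUnit.{1}) → Prop :=
    Sum.Lex ((· < ·) : ℕ → ℕ → Prop) (@emptyRelation PUnit.{1})
  have hiso : Nonempty (R ≃r Subrel ((· < ·) : Ordinal.{u} → Ordinal.{u} → Prop) (· ∈ H)) := by
    refine ⟨⟨E, ?_⟩⟩
    rintro (m | ⟨⟩) (n | ⟨⟩)
    · show ((⟨f m, _⟩ : H) : Ordinal.{u}) < (⟨f n, _⟩ : H).1 ↔ _
      constructor
      · intro h
        exact Sum.Lex.inl (hf.lt_iff_lt.mp h)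
      · intro h
        cases h with
        | inl h => exact hf h
    · show ((⟨f m, _⟩ : H) : Ordinal.{u}) < (⟨δ, _⟩ : H).1 ↔ _
      constructor
      · intro _
        exact Sum.Lex.sep _ _
      · intro _
        exact hδ m
    · show ((⟨δ, _⟩ : H) : Ordinal.{u}) < (⟨f n, _⟩ : H).1 ↔ _
      constructor
      · intro h
        exact absurd (h.trans (hδ n)) (lt_irrefl δ)
      · intro h
        cases h
    · show ((⟨δ, _⟩ : H) : Ordinal.{u}) < (⟨δ, _⟩ : H).1 ↔ _
      constructor
      · intro h
        exact absurd h (lt_irrefl δ)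
      · intro h
        cases h with
        | inr h => exact h.elim
  obtain ⟨iso⟩ := hiso
  have := iso.ordinal_lift_type_eq
  rw [Ordinal.lift_uzero] at this
  rw [otype, ← this]
  show Ordinal.lift.{u+1} (Ordinal.type R) = _
  rw [Ordinal.type_sum_lex, Ordinal.type_nat_lt, Ordinal.type_pUnit, Ordinal.lift_add,
    Ordinal.lift_omega0, Ordinal.lift_one]

/-- An unbounded subset of `Iio κ.ord` has cardinality `κ`, for `κ` regular. -/
lemma mk_eq_of_unbounded {κ : Cardinal.{u}} (hreg : κ.IsRegular) (D : Set Ordinal.{u})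
    (hD : D ⊆ Set.Iio κ.ord) (hub : ∀ α < κ.ord, ∃ β ∈ D, α < β) :
    Cardinal.mk D = Cardinal.lift.{u + 1} κ := by
  set S' : Set (κ.ord).ToType :=
    {x | (((ToType.mk (o := κ.ord)).symm x : Set.Iio κ.ord) : Ordinal.{u}) ∈ D} with hS'
  have memS' : ∀ β (hβ : β ∈ D), ToType.mk (o := κ.ord) ⟨β, hD hβ⟩ ∈ S' := by
    intro β hβ
    show (((ToType.mk (o := κ.ord)).symm _ : Set.Iio κ.ord) : Ordinal.{u}) ∈ D
    rw [OrderIso.symm_apply_apply]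
    exact hβ
  have eDS : ↥D ≃ ↥S' :=
    { toFun := fun x => ⟨ToType.mk (o := κ.ord) ⟨x.1, hD x.2⟩, memS' x.1 x.2⟩
      invFun := fun x => ⟨(((ToType.mk (o := κ.ord)).symm x.1 : Set.Iio κ.ord) : Ordinal.{u}), x.2⟩
      left_inv := by
        intro x
        ext
        simp
      right_inv := by
        intro x
        ext
        simp }
  have hDS : #D = Cardinal.lift.{u + 1} #S' := by
    rw [← Cardinal.mk_uLift]
    exact Cardinal.mk_congr (eDS.trans Equiv.ulift.symm)
  have hub' : Set.Unbounded ((· < ·) : (κ.ord).ToType → (κ.ord).ToType → Prop) S' := by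
    intro a
    obtain ⟨β, hβD, hβ⟩ := hub ((ToType.mk (o := κ.ord)).symm a : Set.Iio κ.ord)
      ((ToType.mk (o := κ.ord)).symm a).2
    refine ⟨ToType.mk (o := κ.ord) ⟨β, hD hβD⟩, memS' β hβD, ?_⟩
    have : a < ToType.mk (o := κ.ord) ⟨β, hD hβD⟩ := by
      conv_lhs => rw [← OrderIso.apply_symm_apply (ToType.mk (o := κ.ord)) a]
      rw [OrderIso.lt_iff_lt]
      exact hβ
    exact asymm this
  haveI : IsWellOrder (κ.ord).ToType (· < ·) := isWellOrder_lt
  have h1 : κ ≤ #S' := by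
    have h := Order.cof_le (s := S') (fun a => by
      obtain ⟨b, hb, hab⟩ := hub' a; exact ⟨b, hb, not_lt.mp hab⟩)
    rwa [Ordinal.cof_toType, hreg.cof_eq] at h
  have h2 : #S' ≤ κ := by
    have := Cardinal.mk_set_le S'
    rwa [mk_toType, Cardinal.card_ord] at this
  rw [hDS, le_antisymm h2 h1]

end EDM

/-- Erdős–Dushnik–Miller: if `κ` is regular and uncountable then `κ → (κ, ω + 1)²`. -/
theorem erdos_dushnik_miller_regular (κ : Cardinal.{u})
    (hreg : κ.IsRegular) (hunc : ℵ₀ < κ)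
    (c : Ordinal.{u} → Ordinal.{u} → Color) :
    (∃ H : Set Ordinal.{u}, H ⊆ Set.Iio κ.ord ∧ #H = Cardinal.lift.{u + 1} κ ∧
      ∀ α ∈ H, ∀ β ∈ H, α < β → c α β = Color.red) ∨
    (∃ H : Set Ordinal.{u}, H ⊆ Set.Iio κ.ord ∧ otype H = Ordinal.omega0 + 1 ∧
      ∀ α ∈ H, ∀ β ∈ H, α < β → c α β = Color.green) := by
  classical
  have hδΘ : EDM.delta c κ.ord < κ.ord := EDM.delta_lt c hreg hunc
  by_cases hA : ∀ s : List Ordinal.{u}, (∀ x ∈ s, x ∈ EDM.Gset c (EDM.delta c κ.ord)) →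
      ∃ β, β ∈ EDM.Kset c κ.ord s ∧ β ∈ EDM.Gset c (EDM.delta c κ.ord)
  · -- green case: build an increasing green chain below `delta` with top point `delta`
    right
    set δ := EDM.delta c κ.ord with hδdef
    set f : ℕ → Ordinal.{u} := EDM.cf c κ.ord δ hA with hfdef
    have hfG : ∀ n, f n ∈ EDM.Gset c δ := EDM.cf_mem_G c κ.ord δ hA
    have hflt : ∀ n, f n < δ := fun n => (hfG n).1
    have hmono : StrictMono f := fun m n h => EDM.cf_lt_cf c κ.ord δ hA h
    refine ⟨Set.range f ∪ {δ}, ?_, EDM.otype_omega_succ f hmono δ hflt, ?_⟩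
    · rintro x (⟨n, rfl⟩ | hx)
      · exact lt_trans (hflt n) hδΘ
      · rw [Set.mem_singleton_iff] at hx
        subst hx
        exact hδΘ
    · rintro α (⟨m, rfl⟩ | hα) β (⟨n, rfl⟩ | hβ) hlt
      · have hmn : m < n := by
          by_contra h
          push_neg at h
          rcases lt_or_eq_of_le h with h' | rfl
          · exact absurd (hmono h') (asymm hlt)
          · exact lt_irrefl _ hlt
        exact EDM.cf_green c κ.ord δ hA hmn
      · rw [Set.mem_singleton_iff] at hβ
        subst hβ
        exact (hfG m).2
      · rw [Set.mem_singleton_iff] at hα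
        subst hα
        exact absurd (hlt.trans (hflt n)) (lt_irrefl _)
      · rw [Set.mem_singleton_iff] at hα hβ
        subst hα
        subst hβ
        exact absurd hlt (lt_irrefl _)
  · -- red case: a maximal green chain yields an unbounded red-homogeneous set
    left
    push_neg at hA
    obtain ⟨s, hsG, hmax⟩ := hA
    have hδK : EDM.delta c κ.ord ∈ EDM.Kset c κ.ord s :=
      ⟨hδΘ, fun x hx => ⟨(hsG x hx).1, (hsG x hx).2⟩⟩
    have hδD : EDM.delta c κ.ord ∈ EDM.Dset c κ.ord s := by
      refine ⟨hδK, fun x hxK hxδ => ?_⟩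
      cases hc : c x (EDM.delta c κ.ord) with
      | red => rfl
      | green =>
        have hxG : x ∈ EDM.Gset c (EDM.delta c κ.ord) := ⟨hxδ, hc⟩
        exact absurd hxG (hmax x hxK)
    have hle : EDM.delta c κ.ord ≤ EDM.Fb c κ.ord s :=
      le_csSup (EDM.Dset_bdd c κ.ord s) hδD
    have hFb : EDM.Fb c κ.ord s = κ.ord := by
      rcases EDM.delta_closed c hreg hunc s (fun x hx => (hsG x hx).1) with h | h
      · exact h
      · exact absurd (lt_of_le_of_lt hle h) (lt_irrefl _)
    have hub : ∀ α < κ.ord, ∃ β ∈ EDM.Dset c κ.ord s, α < β := by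
      intro α hα
      by_contra h
      push_neg at h
      have hsup : EDM.Fb c κ.ord s ≤ α := csSup_le' fun β hβ => h β hβ
      rw [hFb] at hsup
      exact hα.not_ge hsup
    refine ⟨EDM.Dset c κ.ord s, fun β hβ => hβ.1.1,
      EDM.mk_eq_of_unbounded hreg _ (fun β hβ => hβ.1.1) hub, ?_⟩
    intro α hα β hβ hlt
    exact hβ.2 α hα.1 hlt
end

section
/- Let κ > ℵ₀ be a regular cardinal, let D be a κ-complete (proper) filter on a set Y, and let f : Y → Ord. Then J[f,D] := {Z ⊆ Y : Y∖Z ∈ D, or (Z ∉ D and rk_{D+Z}(f) > rk_D(f))} is a κ-complete ideal on Y that is disjoint from D (that is, J[f,D] contains ∅, is downward closed, is closed under unions of fewer than κ of its members, and no member of J[f,D] belongs to D). -/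
open scoped Classical

open Cardinal

/-- `g <_D f` iff `{y : g y < f y} ∈ D`. -/
def ltD {Y : Type*} (D : Filter Y) (g f : Y → Ordinal) : Prop :=
  {y | g y < f y} ∈ D

/-- The rank `rk_D(f)` of `f : Y → Ord` in the well-founded relation `<_D`
(defined as `0` in the degenerate case where `<_D` is not well-founded). -/
noncomputable def rkD {Y : Type*} (D : Filter Y) (f : Y → Ordinal) : Ordinal :=
  if h : WellFounded (ltD D) then (h.apply f).rank else 0

/-- `J[f,D] = {Z ⊆ Y : Y∖Z ∈ D, or (Z ∉ D and rk_{D+Z}(f) > rk_D(f))}`,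
where `D+Z` is the filter generated by `D ∪ {Z}`. -/
noncomputable def JfD {Y : Type*} (D : Filter Y) (f : Y → Ordinal) : Set (Set Y) :=
  {Z | Zᶜ ∈ D ∨ (Z ∉ D ∧ rkD D f < rkD (D ⊓ Filter.principal Z) f)}

universe u v

/-! ### Auxiliary rank lemmas -/

theorem acc_rank_pi {α : Type*} {r : α → α → Prop} {a : α} (h1 h2 : Acc r a) :
    h1.rank = h2.rank := by rw [Subsingleton.elim h1 h2]

theorem acc_rank_mono {α : Type*} {r s : α → α → Prop} (hrs : ∀ {a b : α}, r a b → s a b) :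
    ∀ {a : α} (hb : Acc s a) (ha : Acc r a), ha.rank ≤ hb.rank := by
  intro a hb
  induction hb with
  | intro x hx ih =>
    intro ha
    rw [ha.rank_eq]
    refine ciSup_le' ?_
    rintro ⟨b, hb'⟩
    refine Order.succ_le_iff.mpr (lt_of_le_of_lt ?_
      (Acc.rank_lt_of_rel (Acc.intro x hx) (hrs hb')))
    rw [acc_rank_pi ((Acc.intro x hx).inv (hrs hb')) (hx b (hrs hb'))]
    exact ih b (hrs hb') _

theorem acc_rank_le_of_pred {α : Type*} {r : α → α → Prop} {a a' : α}
    (h : ∀ b, r b a → r b a') (ha : Acc r a) (ha' : Acc r a') : ha.rank ≤ ha'.rank := by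
  rw [ha.rank_eq]
  refine ciSup_le' ?_
  rintro ⟨b, hb⟩
  rw [acc_rank_pi (ha.inv hb) (ha'.inv (h b hb))]
  exact Order.succ_le_iff.mpr (Acc.rank_lt_of_rel ha' (h b hb))

theorem acc_exists_pred {α : Type*} {r : α → α → Prop} {a : α} (ha : Acc r a)
    {γ : Ordinal} (h : γ < ha.rank) : ∃ b, ∃ hb : r b a, γ ≤ (ha.inv hb).rank := by
  rw [ha.rank_eq, Ordinal.lt_iSup_iff] at h
  obtain ⟨⟨b, hb⟩, hlt⟩ := h
  exact ⟨b, hb, Order.lt_succ_iff.mp hlt⟩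

/-! ### rkD lemmas -/

theorem rkD_eq {Y : Type u} {D : Filter Y} {f : Y → Ordinal.{v}}
    (h : WellFounded (α := Y → Ordinal.{v}) (ltD D)) :
    rkD D f = (h.apply f).rank := dif_pos h

theorem rkD_lt_of_ltD {Y : Type u} {D : Filter Y} {g f : Y → Ordinal.{v}}
    (h : WellFounded (α := Y → Ordinal.{v}) (ltD D))
    (hgf : ltD D g f) : rkD D g < rkD D f := by
  rw [rkD_eq h, rkD_eq h]
  rw [acc_rank_pi (h.apply g) ((h.apply f).inv hgf)]
  exact Acc.rank_lt_of_rel _ hgf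

theorem rkD_mono {Y : Type u} {E F : Filter Y} (hEF : E ≤ F)
    {f : Y → Ordinal.{v}} (hE : WellFounded (α := Y → Ordinal.{v}) (ltD E)) :
    rkD F f ≤ rkD E f := by
  have hsub : ∀ {g h : Y → Ordinal.{v}}, ltD F g h → ltD E g h := fun h => hEF h
  have hF : WellFounded (α := Y → Ordinal.{v}) (ltD F) := Subrelation.wf hsub hE
  rw [rkD_eq hE, rkD_eq hF]
  exact acc_rank_mono hsub (hE.apply f) (hF.apply f)

theorem rkD_congr {Y : Type u} {E : Filter Y} {g g' : Y → Ordinal.{v}}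
    (hE : WellFounded (α := Y → Ordinal.{v}) (ltD E))
    (h : {y | g y = g' y} ∈ E) : rkD E g = rkD E g' := by
  have key : ∀ u, ltD E u g → ltD E u g' := by
    intro u hu
    refine Filter.mem_of_superset (Filter.inter_mem hu h) ?_
    rintro y ⟨h1, h2⟩
    exact lt_of_lt_of_le h1 (le_of_eq h2)
  have key' : ∀ u, ltD E u g' → ltD E u g := by
    intro u hu
    refine Filter.mem_of_superset (Filter.inter_mem hu h) ?_
    rintro y ⟨h1, h2⟩
    exact lt_of_lt_of_le h1 (le_of_eq (Eq.symm h2))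
  rw [rkD_eq hE, rkD_eq hE]
  exact le_antisymm (acc_rank_le_of_pred key _ _) (acc_rank_le_of_pred key' _ _)

theorem rkD_exists {Y : Type u} {E : Filter Y} {f : Y → Ordinal.{v}}
    (hE : WellFounded (α := Y → Ordinal.{v}) (ltD E))
    {γ : Ordinal} (h : γ < rkD E f) :
    ∃ g, ltD E g f ∧ γ ≤ rkD E g := by
  rw [rkD_eq hE] at h
  obtain ⟨b, hb, h2⟩ := acc_exists_pred _ h
  refine ⟨b, hb, ?_⟩
  rw [rkD_eq hE, acc_rank_pi (hE.apply b) ((hE.apply f).inv hb)]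
  exact h2

/-! ### Well-foundedness from countable completeness -/

theorem wf_ltD {Y : Type u} {D : Filter Y}
    (hcc : ∀ A : ℕ → Set Y, (∀ n, A n ∈ D) → (⋂ n, A n) ∈ D)
    {W : Set Y} (hW : Wᶜ ∉ D) :
    WellFounded (α := Y → Ordinal.{v}) (ltD (D ⊓ Filter.principal W)) := by
  set E := D ⊓ Filter.principal W with hE
  by_contra hwf
  obtain ⟨a, ha⟩ : ∃ a : Y → Ordinal.{v}, ¬Acc (ltD E) a := by
    by_contra hc
    push_neg at hc
    exact hwf ⟨hc⟩
  have step : ∀ x : {a : Y → Ordinal.{v} // ¬Acc (ltD E) a},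
      ∃ y : {a : Y → Ordinal.{v} // ¬Acc (ltD E) a}, ltD E y.1 x.1 := by
    rintro ⟨x, hx⟩
    obtain ⟨b, hb1, hb2⟩ := exists_not_acc_lt_of_not_acc hx
    exact ⟨⟨b, hb1⟩, hb2⟩
  choose F hF using step
  set e : ℕ → Y → Ordinal.{v} := fun n => (F^[n] ⟨a, ha⟩).1 with he
  have hdec : ∀ n : ℕ, ltD E (e (n + 1)) (e n) := by
    intro n
    have : F^[n + 1] ⟨a, ha⟩ = F (F^[n] ⟨a, ha⟩) := Function.iterate_succ_apply' F n _
    simpa [he, this] using hF (F^[n] ⟨a, ha⟩)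
  set A : ℕ → Set Y := fun n => {x | x ∈ W → x ∈ {y | e (n + 1) y < e n y}} with hA
  have hAD : ∀ n, A n ∈ D := fun n => Filter.mem_inf_principal.mp (hdec n)
  have hB : (⋂ n, A n) ∈ D := hcc A hAD
  have hne : ((⋂ n, A n) ∩ W).Nonempty := by
    by_contra h
    rw [Set.not_nonempty_iff_eq_empty] at h
    refine hW (Filter.mem_of_superset hB ?_)
    intro x hx hxW
    exact Set.eq_empty_iff_forall_notMem.mp h x ⟨hx, hxW⟩
  obtain ⟨y, hy, hyW⟩ := hne
  have hdesc : ∀ n : ℕ, e (n + 1) y < e n y := fun n => (Set.mem_iInter.mp hy n) hyW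
  exact (RelEmbedding.natGT (fun n => e n y) hdesc).not_wellFounded
    Ordinal.lt_wf

/-! ### Filter lemmas -/

theorem inf_principal_congr' {Y : Type u} {D : Filter Y} {N Z Z' : Set Y} (hN : N ∈ D)
    (h : N ∩ Z = N ∩ Z') : D ⊓ Filter.principal Z = D ⊓ Filter.principal Z' := by
  have h1 : ∀ {A B : Set Y}, N ∩ A = N ∩ B →
      D ⊓ Filter.principal A ≤ D ⊓ Filter.principal B := by
    intro A B hAB
    refine le_inf inf_le_left (Filter.le_principal_iff.mpr ?_)
    have hmem : N ∩ A ∈ D ⊓ Filter.principal A :=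
      Filter.inter_mem_inf hN (Filter.mem_principal_self A)
    exact Filter.mem_of_superset hmem (by rw [hAB]; exact Set.inter_subset_right)
  exact le_antisymm (h1 h) (h1 h.symm)

/-! ### The key lemma -/

theorem JfD_key {Y : Type u} {κ : Cardinal.{u}} {D : Filter Y}
    (hcompl : ∀ {ι : Type u} (A : ι → Set Y), #ι < κ → (∀ i, A i ∈ D) → (⋂ i, A i) ∈ D)
    (hcc : ∀ A : ℕ → Set Y, (∀ n, A n ∈ D) → (⋂ n, A n) ∈ D)
    {ι : Type u} (hι : #ι < κ) (Z : ι → Set Y)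
    (hdisj : ∀ i j, i ≠ j → Z i ∩ Z j = ∅)
    (hprop : ∀ i, (Z i)ᶜ ∉ D)
    (hU : (⋃ i, Z i)ᶜ ∉ D)
    (β : Ordinal) :
    ∀ f : Y → Ordinal.{v}, (∀ i, β ≤ rkD (D ⊓ Filter.principal (Z i)) f) →
      β ≤ rkD (D ⊓ Filter.principal (⋃ i, Z i)) f := by
  induction β using Ordinal.induction with
  | h β ih =>
    intro f hf
    have wfU : WellFounded (α := Y → Ordinal.{v}) (ltD (D ⊓ Filter.principal (⋃ i, Z i))) :=
      wf_ltD hcc hU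
    refine le_of_forall_lt fun γ hγ => ?_
    have hgi : ∀ i, ∃ g, ltD (D ⊓ Filter.principal (Z i)) g f ∧
        γ ≤ rkD (D ⊓ Filter.principal (Z i)) g := fun i =>
      rkD_exists (wf_ltD hcc (hprop i)) (lt_of_lt_of_le hγ (hf i))
    choose g hg1 hg2 using hgi
    set B : ι → Set Y := fun i => {x | x ∈ Z i → x ∈ {y | g i y < f y}} with hB
    have hBmem : ∀ i, B i ∈ D := fun i => Filter.mem_inf_principal.mp (hg1 i)
    have hBall : (⋂ i, B i) ∈ D := hcompl B hι hBmem
    set G : Y → Ordinal.{v} := fun y => if h : ∃ i, y ∈ Z i then g h.choose y else 0 with hG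
    have hGeq : ∀ i y, y ∈ Z i → G y = g i y := by
      intro i y hy
      have hex : ∃ j, y ∈ Z j := ⟨i, hy⟩
      have hch : hex.choose = i := by
        by_contra hne
        exact Set.eq_empty_iff_forall_notMem.mp (hdisj _ _ hne) y
          (Set.mem_inter hex.choose_spec hy)
      simp only [hG, dif_pos hex, hch]
    have hGi : ∀ i, γ ≤ rkD (D ⊓ Filter.principal (Z i)) G := by
      intro i
      have hmem : {y | G y = g i y} ∈ D ⊓ Filter.principal (Z i) :=
        Filter.mem_of_superset (Filter.mem_inf_of_right (Filter.mem_principal_self _))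
          (fun y hy => hGeq i y hy)
      rw [rkD_congr (wf_ltD hcc (hprop i)) hmem]
      exact hg2 i
    have hGU : γ ≤ rkD (D ⊓ Filter.principal (⋃ i, Z i)) G := ih γ hγ G hGi
    have hGf : ltD (D ⊓ Filter.principal (⋃ i, Z i)) G f := by
      refine Filter.mem_of_superset
        (Filter.inter_mem_inf hBall (Filter.mem_principal_self _)) ?_
      rintro y ⟨hyB, hyU⟩
      obtain ⟨i, hyi⟩ := Set.mem_iUnion.mp hyU
      have hGy := hGeq i y hyi
      show G y < f y
      rw [hGy]
      exact (Set.mem_iInter.mp hyB i) hyi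
    exact lt_of_le_of_lt hGU (rkD_lt_of_ltD wfU hGf)

/-- If `κ > ℵ₀` is regular and `D` is a proper `κ`-complete filter on `Y`, then `J[f,D]`
is a `κ`-complete ideal on `Y` disjoint from `D`: it contains `∅`, is downward closed,
is closed under unions of fewer than `κ` of its members, and no member of it lies in `D`. -/
theorem JfD_ideal {Y : Type*} (κ : Cardinal) (hκ : ℵ₀ < κ) (hreg : κ.IsRegular)
    (D : Filter Y) (hproper : D.NeBot)
    (hcomplete : ∀ s : Set (Set Y), (∀ A ∈ s, A ∈ D) → #s < κ → ⋂₀ s ∈ D)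
    (f : Y → Ordinal) :
    ∅ ∈ JfD D f ∧
    (∀ Z ∈ JfD D f, ∀ W : Set Y, W ⊆ Z → W ∈ JfD D f) ∧
    (∀ s : Set (Set Y), (∀ A ∈ s, A ∈ JfD D f) → #s < κ → ⋃₀ s ∈ JfD D f) ∧
    (∀ Z ∈ JfD D f, Z ∉ D) := by
  classical
  have hcompl : ∀ {ι : Type _} (A : ι → Set Y), #ι < κ → (∀ i, A i ∈ D) → (⋂ i, A i) ∈ D := by
    intro ι A hι hA
    have h1 : ⋂₀ (Set.range A) ∈ D := by
      refine hcomplete _ (by rintro _ ⟨i, rfl⟩; exact hA i)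
        (lt_of_le_of_lt Cardinal.mk_range_le hι)
    rwa [Set.sInter_range] at h1
  have hcc : ∀ A : ℕ → Set Y, (∀ n, A n ∈ D) → (⋂ n, A n) ∈ D := by
    intro A hA
    haveI := (Set.countable_range A).to_subtype
    have h1 : ⋂₀ (Set.range A) ∈ D := by
      refine hcomplete _ (by rintro _ ⟨n, rfl⟩; exact hA n)
        (lt_of_le_of_lt Cardinal.mk_le_aleph0 hκ)
    rwa [Set.sInter_range] at h1
  refine ⟨?_, ?_, ?_, ?_⟩
  · exact Or.inl (by rw [Set.compl_empty]; exact Filter.univ_mem)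
  · rintro Z hZ W hWZ
    rcases hZ with h | ⟨hZD, hrk⟩
    · exact Or.inl (Filter.mem_of_superset h (Set.compl_subset_compl.mpr hWZ))
    · by_cases hW : Wᶜ ∈ D
      · exact Or.inl hW
      · refine Or.inr ⟨fun hWD => hZD (Filter.mem_of_superset hWD hWZ),
          lt_of_lt_of_le hrk ?_⟩
        exact rkD_mono (inf_le_inf_left D (Filter.principal_mono.mpr hWZ))
          (wf_ltD hcc hW)
  · intro s hs hcard
    by_cases hUc : (⋃₀ s)ᶜ ∈ D
    · exact Or.inl hUc
    set s₁ : Set (Set Y) := {Z ∈ s | Zᶜ ∈ D} with hs₁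
    set s₂ : Set (Set Y) := {Z ∈ s | Zᶜ ∉ D} with hs₂
    -- disjointification of s₂ via a well-order
    set r : ↥s₂ → ↥s₂ → Prop := WellOrderingRel with hr
    have hrwf : WellFounded r := (WellOrderingRel.isWellOrder).toIsWellFounded.wf
    set Z' : ↥s₂ → Set Y := fun i => (↑i : Set Y) \ ⋃ j : {j : ↥s₂ // r j i}, (↑↑j : Set Y)
      with hZ'
    have hdisj : ∀ i j : ↥s₂, i ≠ j → Z' i ∩ Z' j = ∅ := by
      have haux : ∀ i j : ↥s₂, r i j → Z' i ∩ Z' j = ∅ := by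
        intro i j hij
        refine Set.eq_empty_iff_forall_notMem.mpr ?_
        rintro y ⟨hyi, hyj⟩
        exact hyj.2 (Set.mem_iUnion.mpr ⟨⟨i, hij⟩, hyi.1⟩)
      intro i j hij
      rcases trichotomous_of r i j with h | h | h
      · exact haux i j h
      · exact absurd h hij
      · rw [Set.inter_comm]; exact haux j i h
    have hcover : ∀ y : Y, (∃ Z ∈ s₂, y ∈ Z) → ∃ i : ↥s₂, y ∈ Z' i := by
      rintro y ⟨Z, hZ, hy⟩
      set T : Set ↥s₂ := {i | y ∈ (↑i : Set Y)} with hT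
      have hTne : T.Nonempty := ⟨⟨Z, hZ⟩, hy⟩
      refine ⟨hrwf.min T hTne, hrwf.min_mem T hTne, ?_⟩
      intro hmem
      obtain ⟨⟨j, hj⟩, hyj⟩ := Set.mem_iUnion.mp hmem
      exact hrwf.not_lt_min T (hyj : j ∈ T) hj
    -- kept indices
    set ι : Type _ := {i : ↥s₂ // (Z' i)ᶜ ∉ D} with hι
    set Z'' : ι → Set Y := fun i => Z' ↑i with hZ''
    set U : Set Y := ⋃₀ s with hU
    set U' : Set Y := ⋃ i : ι, Z'' i with hU'
    have hcards₂ : #↥s₂ < κ := lt_of_le_of_lt (Cardinal.mk_le_mk_of_subset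
      (Set.sep_subset _ _)) hcard
    -- the null sets
    have hN₁ : (⋂ W : ↥s₁, (↑W : Set Y)ᶜ) ∈ D := by
      refine hcompl _ (lt_of_le_of_lt (Cardinal.mk_le_mk_of_subset
        (Set.sep_subset _ _)) hcard) ?_
      rintro ⟨W, hW⟩
      exact hW.2
    have hN₂ : (⋂ j : {i : ↥s₂ // (Z' i)ᶜ ∈ D}, (Z' ↑j)ᶜ) ∈ D := by
      refine hcompl _ (lt_of_le_of_lt (Cardinal.mk_subtype_le _) hcards₂) ?_
      rintro ⟨j, hj⟩
      exact hj
    set N : Set Y := (⋂ W : ↥s₁, (↑W : Set Y)ᶜ) ∩ (⋂ j : {i : ↥s₂ // (Z' i)ᶜ ∈ D}, (Z' ↑j)ᶜ)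
      with hN
    have hND : N ∈ D := Filter.inter_mem hN₁ hN₂
    have hNU : N ∩ U ⊆ U' := by
      rintro y ⟨hyN, hyU⟩
      obtain ⟨Z, hZs, hyZ⟩ := hyU
      have hZs₂ : Z ∈ s₂ := by
        by_cases hZc : Zᶜ ∈ D
        · exact absurd hyZ (Set.mem_iInter.mp hyN.1 ⟨Z, hZs, hZc⟩)
        · exact ⟨hZs, hZc⟩
      obtain ⟨i, hyi⟩ := hcover y ⟨Z, hZs₂, hyZ⟩
      by_cases hkeep : (Z' i)ᶜ ∉ D
      · exact Set.mem_iUnion.mpr ⟨⟨i, hkeep⟩, hyi⟩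
      · rw [not_not] at hkeep
        exact absurd hyi (Set.mem_iInter.mp hyN.2 ⟨i, hkeep⟩)
    have hU'U : U' ⊆ U := by
      rintro y hy
      obtain ⟨i, hyi⟩ := Set.mem_iUnion.mp hy
      exact ⟨↑↑i, (↑i : ↥s₂).2.1, hyi.1⟩
    have hNeq : N ∩ U = N ∩ U' := by
      apply Set.Subset.antisymm
      · intro y hy
        exact ⟨hy.1, hNU hy⟩
      · intro y hy
        exact ⟨hy.1, hU'U hy.2⟩
    have hfe : D ⊓ Filter.principal U = D ⊓ Filter.principal U' :=
      inf_principal_congr' hND hNeq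
    have hU'c : U'ᶜ ∉ D := by
      intro h
      refine hUc (Filter.mem_of_superset (Filter.inter_mem h hND) ?_)
      rintro y ⟨hyU', hyN⟩ hyU
      exact hyU' (hNU ⟨hyN, hyU⟩)
    have hdisj'' : ∀ i j : ι, i ≠ j → Z'' i ∩ Z'' j = ∅ := fun i j hij =>
      hdisj ↑i ↑j (fun h => hij (Subtype.ext h))
    have hprop'' : ∀ i : ι, (Z'' i)ᶜ ∉ D := fun i => i.2
    have hcardι : #ι < κ := lt_of_le_of_lt (Cardinal.mk_subtype_le _) hcards₂
    have hβ : ∀ i : ι, Order.succ (rkD D f) ≤ rkD (D ⊓ Filter.principal (Z'' i)) f := by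
      intro i
      have hmemJ := hs ↑↑i (↑i : ↥s₂).2.1
      have h2 : rkD D f < rkD (D ⊓ Filter.principal (↑↑i : Set Y)) f := by
        rcases hmemJ with h | h
        · exact absurd h (↑i : ↥s₂).2.2
        · exact h.2
      have h3 : rkD (D ⊓ Filter.principal (↑↑i : Set Y)) f ≤
          rkD (D ⊓ Filter.principal (Z'' i)) f :=
        rkD_mono (inf_le_inf_left D (Filter.principal_mono.mpr Set.diff_subset))
          (wf_ltD hcc i.2)
      exact Order.succ_le_iff.mpr (lt_of_lt_of_le h2 h3)
    have hkey := JfD_key hcompl hcc hcardι Z'' hdisj'' hprop'' hU'c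
      (Order.succ (rkD D f)) f hβ
    have hfinal : rkD D f < rkD (D ⊓ Filter.principal U) f := by
      rw [hfe]
      exact Order.succ_le_iff.mp hkey
    refine Or.inr ⟨?_, hfinal⟩
    intro hUD
    have heq : D ⊓ Filter.principal U = D :=
      inf_eq_left.mpr (Filter.le_principal_iff.mpr hUD)
    rw [heq] at hfinal
    exact lt_irrefl _ hfinal
  · rintro Z (h | h) hZD
    · exact Filter.empty_notMem D
        (by rw [← Set.inter_compl_self Z]; exact Filter.inter_mem hZD h)
    · exact h.1 hZD
end

section
/- Let κ > ℵ₀ be a regular cardinal, let D be a κ-complete (proper) filter on a set Y, let f : Y → Ord, and let Z ⊆ Y be a set that is positive with respect to the dual filter of J[f,D], i.e. Z ∉ J[f,D] and Y∖Z ∉ D. Then rk_{D+Z}(f) = rk_D(f). -/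
open scoped Classical

open Cardinal

/-- From non-well-foundedness, extract a descending sequence. -/
lemma exists_descending_of_not_wf {α : Type*} {r : α → α → Prop} (h : ¬ WellFounded r) :
    ∃ g : ℕ → α, ∀ n, r (g (n+1)) (g n) := by
  have hS : ∃ a, ¬ Acc r a := by
    by_contra hc
    push_neg at hc
    exact h ⟨hc⟩
  obtain ⟨a₀, ha₀⟩ := hS
  have step : ∀ a : {a // ¬ Acc r a}, ∃ b : {a // ¬ Acc r a}, r b.1 a.1 := by
    rintro ⟨a, ha⟩
    by_contra hc
    push_neg at hc
    exact ha (Acc.intro a fun b hb => by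
      by_contra hb'
      exact hc ⟨b, hb'⟩ hb)
  choose F hF using step
  refine ⟨fun n => (F^[n] ⟨a₀, ha₀⟩).1, fun n => ?_⟩
  show r (F^[n+1] ⟨a₀, ha₀⟩).1 (F^[n] ⟨a₀, ha₀⟩).1
  rw [Function.iterate_succ_apply']
  exact hF _

/-- `ltD D` is well-founded for countably complete proper filters. -/
lemma ltD_wf {Y : Type*} (D : Filter Y) (hproper : D.NeBot)
    (hcount : ∀ g : ℕ → Set Y, (∀ n, g n ∈ D) → ⋂ n, g n ∈ D) :
    WellFounded (ltD D) := by
  by_contra h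
  obtain ⟨g, hg⟩ := exists_descending_of_not_wf h
  have hA : ⋂ n, {y | g (n+1) y < g n y} ∈ D := hcount _ hg
  obtain ⟨y, hy⟩ := Filter.nonempty_of_mem hA
  simp only [Set.mem_iInter, Set.mem_setOf_eq] at hy
  exact (RelEmbedding.natGT (fun n => g n y) hy).not_wellFounded
    Ordinal.lt_wf

lemma rank_mono_rel {α : Type*} {r r' : α → α → Prop} (hrr : ∀ a b, r a b → r' a b)
    (hwf : WellFounded r) : ∀ a (h' : Acc r' a), (hwf.apply a).rank ≤ h'.rank := by
  intro a h'
  induction h' with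
  | intro a ha ih =>
    rw [Acc.rank_eq, Acc.rank_eq]
    apply Ordinal.iSup_le
    rintro ⟨b, hb⟩
    calc Order.succ ((hwf.apply a).inv hb).rank
        ≤ Order.succ ((Acc.intro a ha).inv (hrr b a hb)).rank := by
          exact Order.succ_le_succ (ih b (hrr b a hb))
      _ ≤ _ := Ordinal.le_iSup (fun b : {b // r' b a} => Order.succ ((Acc.intro a ha).inv b.2).rank) ⟨b, hrr b a hb⟩

/-- If `κ > ℵ₀` is regular, `D` is a proper `κ`-complete filter on `Y`, and `Z` is positive
for the dual filter of `J[f,D]` (i.e. `Z ∉ J[f,D]` and `Y∖Z ∉ D`), then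
`rk_{D+Z}(f) = rk_D(f)`. -/
theorem rkD_restrict_eq_of_positive {Y : Type*} (κ : Cardinal) (hκ : ℵ₀ < κ)
    (hreg : κ.IsRegular) (D : Filter Y) (hproper : D.NeBot)
    (hcomplete : ∀ s : Set (Set Y), (∀ A ∈ s, A ∈ D) → #s < κ → ⋂₀ s ∈ D)
    (f : Y → Ordinal) (Z : Set Y) (hZ : Z ∉ JfD D f) (hZ' : Zᶜ ∉ D) :
    rkD (D ⊓ Filter.principal Z) f = rkD D f := by
  simp only [JfD, Set.mem_setOf_eq, not_or, not_and, not_lt] at hZ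
  obtain ⟨-, hZ2⟩ := hZ
  by_cases hmem : Z ∈ D
  · rw [inf_eq_left.mpr (Filter.le_principal_iff.mpr hmem)]
  · -- rkD (D+Z) ≤ rkD D and rkD D ≤ rkD (D+Z)
    have hle := hZ2 hmem
    refine le_antisymm hle ?_
    have hcount : ∀ g : ℕ → Set Y, (∀ n, g n ∈ D) → ⋂ n, g n ∈ D := by
      intro g hg
      have : ⋂₀ (Set.range g) ∈ D := by
        apply hcomplete _ (by rintro A ⟨n, rfl⟩; exact hg n)
        exact lt_of_le_of_lt ((Set.countable_range g).le_aleph0) hκ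
      rwa [Set.sInter_range] at this
    have hwfD : WellFounded (ltD D) := ltD_wf D hproper hcount
    have hDZproper : (D ⊓ Filter.principal Z).NeBot := by
      rw [Filter.inf_principal_neBot_iff]
      intro U hU
      by_contra hc
      rw [Set.not_nonempty_iff_eq_empty] at hc
      exact hZ' (Filter.mem_of_superset hU (by
        intro y hy
        by_contra hyZ
        simp only [Set.mem_compl_iff, not_not] at hyZ
        exact Set.eq_empty_iff_forall_notMem.mp hc y ⟨hy, hyZ⟩))
    have hcount' : ∀ g : ℕ → Set Y, (∀ n, g n ∈ D ⊓ Filter.principal Z) →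
        ⋂ n, g n ∈ D ⊓ Filter.principal Z := by
      intro g hg
      have h1 : ∀ n, ∃ A ∈ D, A ∩ Z ⊆ g n := by
        intro n
        obtain ⟨A, hA, B, hB, hAB⟩ := Filter.mem_inf_iff.mp (hg n)
        exact ⟨A, hA, by rw [hAB]; exact Set.inter_subset_inter_right A (Filter.mem_principal.mp hB)⟩
      choose A hA hAZ using h1
      have : (⋂ n, A n) ∩ Z ⊆ ⋂ n, g n := by
        intro y hy
        exact Set.mem_iInter.mpr fun n => hAZ n ⟨Set.mem_iInter.mp hy.1 n, hy.2⟩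
      exact Filter.mem_of_superset
        (Filter.inter_mem_inf (hcount A hA) (Filter.mem_principal_self Z)) this
    have hwfDZ : WellFounded (ltD (D ⊓ Filter.principal Z)) := ltD_wf _ hDZproper hcount'
    have hmono : ∀ g h : Y → Ordinal, ltD D g h → ltD (D ⊓ Filter.principal Z) g h :=
      fun g h hgh => Filter.mem_of_superset (inf_le_left (b := Filter.principal Z) hgh)
        le_rfl
    rw [rkD, rkD, dif_pos hwfD, dif_pos hwfDZ]
    exact rank_mono_rel hmono hwfD f (hwfDZ.apply f)
end
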